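/- arXiv:1711.05311 — 4 statements merged into one kernel-verified Lean document; each statement's English description precedes it below -/
import Mathlib

section
/- Let 0 < λ < 1, τ > 0, m, b ≥ 1 be integers with (1+τ)^b = 1 + m·λ, and let S be a finite set with |S| ≤ M. Suppose X, Y ⊆ S are disjoint with |X| ≤ (m/(m+b))·|X ∪ Y| - ℓ for some ℓ > 0. Then (1-λ)^{|X|}(1+τ)^{|Y|} ≥ ((1+τ)/(1-λ))^ℓ · ((1-λ)^m (1+τ)^b)^{M/(m+b)}. -/
open Finset

theorem stmt_5 {α : Type*} [DecidableEq α] (lam tau : ℝ) (hl : 0 < lam) (hl1 : lam < 1)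
    (ht : 0 < tau) (m b : ℕ) (hm : 1 ≤ m) (hb : 1 ≤ b)
    (htau : (1 + tau) ^ b = 1 + m * lam)
    (S : Finset α) (M : ℝ) (hSM : (S.card : ℝ) ≤ M)
    (X Y : Finset α) (hX : X ⊆ S) (hY : Y ⊆ S) (hdisj : Disjoint X Y)
    (ℓ : ℝ) (hℓ : 0 < ℓ)
    (hdef : (X.card : ℝ) ≤ (m / (m + b)) * ((X ∪ Y).card : ℝ) - ℓ) :
    (1 - lam) ^ X.card * (1 + tau) ^ Y.card ≥
      ((1 + tau) / (1 - lam)) ^ ℓ * ((1 - lam) ^ m * (1 + tau) ^ b) ^ (M / (m + b)) := by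
  have hA : (0:ℝ) < 1 - lam := by linarith
  have hA1 : 1 - lam < 1 := by linarith
  have hB : (1:ℝ) < 1 + tau := by linarith
  have hB0 : (0:ℝ) < 1 + tau := by linarith
  have hmR : (0:ℝ) < m := by exact_mod_cast hm
  have hbR : (0:ℝ) < b := by exact_mod_cast hb
  have hK : (0:ℝ) < (m:ℝ) + b := by linarith
  -- key fact
  have hP1 : (1 - lam) ^ m * (1 + tau) ^ b ≤ 1 := by
    rw [htau]
    have h1 : (1 - lam) ^ m ≤ Real.exp (-((m:ℝ) * lam)) := by
      calc (1 - lam) ^ m ≤ (Real.exp (-lam)) ^ m := by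
            apply pow_le_pow_left₀ hA.le
            have := Real.add_one_le_exp (-lam); linarith
        _ = Real.exp (-((m:ℝ) * lam)) := by
            rw [← Real.exp_nat_mul]; ring_nf
    have h2 : (1 + (m:ℝ) * lam) ≤ Real.exp ((m:ℝ) * lam) := by
      have := Real.add_one_le_exp ((m:ℝ) * lam); linarith
    calc (1 - lam) ^ m * (1 + (m:ℝ) * lam)
        ≤ Real.exp (-((m:ℝ) * lam)) * Real.exp ((m:ℝ) * lam) := by
          apply mul_le_mul h1 h2 (by positivity) (Real.exp_nonneg _)
      _ = 1 := by rw [← Real.exp_add]; ring_nf; exact Real.exp_zero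
  have hP0 : (0:ℝ) < (1 - lam) ^ m * (1 + tau) ^ b := by positivity
  have hlogP : (m:ℝ) * Real.log (1 - lam) + (b:ℝ) * Real.log (1 + tau) ≤ 0 := by
    have := Real.log_nonpos hP0.le hP1
    rwa [Real.log_mul (by positivity) (by positivity), Real.log_pow, Real.log_pow] at this
  have hLpos : (0:ℝ) < (1 - lam) ^ X.card * (1 + tau) ^ Y.card := by positivity
  have hRpos : (0:ℝ) < ((1 + tau) / (1 - lam)) ^ ℓ * ((1 - lam) ^ m * (1 + tau) ^ b) ^ (M / ((m:ℝ) + b)) := by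
    positivity
  rw [ge_iff_le, ← Real.log_le_log_iff hRpos hLpos]
  rw [Real.log_mul (ne_of_gt (by positivity)) (ne_of_gt (by positivity)),
      Real.log_mul (ne_of_gt (by positivity)) (ne_of_gt (by positivity)),
      Real.log_rpow (by positivity), Real.log_rpow hP0,
      Real.log_div (ne_of_gt hB0) (ne_of_gt hA),
      Real.log_mul (ne_of_gt (by positivity)) (ne_of_gt (by positivity)),
      Real.log_pow, Real.log_pow, Real.log_pow, Real.log_pow]
  -- card facts
  have hcardU : ((X ∪ Y).card : ℝ) = (X.card : ℝ) + Y.card := by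
    rw [card_union_of_disjoint hdisj]; push_cast; ring
  have hn : (X.card : ℝ) + Y.card ≤ M := by
    rw [← hcardU]
    exact le_trans (by exact_mod_cast card_le_card (union_subset hX hY)) hSM
  rw [hcardU] at hdef
  set x := (X.card : ℝ)
  set y := (Y.card : ℝ)
  set la := Real.log (1 - lam)
  set lb := Real.log (1 + tau)
  have hla : la < 0 := Real.log_neg hA hA1
  have hlb : 0 < lb := Real.log_pos hB
  have hdef' : ((m:ℝ) + b) * x ≤ (m:ℝ) * (x + y) - ((m:ℝ) + b) * ℓ := by
    have h := mul_le_mul_of_nonneg_left hdef hK.le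
    rw [mul_sub, ← mul_assoc, mul_div_cancel₀ _ (ne_of_gt hK)] at h
    linarith
  have P1 : 0 ≤ ((m:ℝ) * (x + y) - ((m:ℝ)+b) * ℓ - ((m:ℝ)+b) * x) * (lb - la) := by
    apply mul_nonneg (by linarith) (by linarith)
  have P2 : 0 ≤ (M - (x + y)) * (-((m:ℝ) * la + (b:ℝ) * lb)) := by
    apply mul_nonneg (by linarith) (by linarith)
  have hMd : M / ((m:ℝ) + b) * ((m:ℝ) * la + (b:ℝ) * lb) * ((m:ℝ)+b) = M * ((m:ℝ) * la + (b:ℝ) * lb) := by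
    field_simp
  nlinarith [P1, P2, mul_pos hK hK]
end

section
/- Let n be a positive integer divisible by 3 and b ≥ 4·√n. In the (1:b) Maker-Breaker game on the edge set of K_n (Maker claims 1 edge per round, then Breaker claims b edges per round), Breaker has a strategy ensuring that Maker's graph never contains a triangle. In particular, Breaker wins the K_3-factor game. -/
open Finset

/-- Maker's graph (a set of claimed edges) contains a triangle. -/
def HasTriangle {n : ℕ} (M : Finset (Sym2 (Fin n))) : Prop :=
  ∃ x y z : Fin n, x ≠ y ∧ y ≠ z ∧ x ≠ z ∧
    s(x, y) ∈ M ∧ s(y, z) ∈ M ∧ s(x, z) ∈ M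

namespace Stmt7
variable {n : ℕ}

def edgesAt (u : Fin n) : Finset (Sym2 (Fin n)) :=
  (Finset.univ \ {u}).image (fun w => s(u, w))

lemma mem_edgesAt {u w : Fin n} (h : w ≠ u) : s(u, w) ∈ edgesAt u := by
  simp only [edgesAt, mem_image, mem_sdiff, mem_univ, mem_singleton, true_and]
  exact ⟨w, h, rfl⟩

lemma edgesAt_nondiag {u : Fin n} {e : Sym2 (Fin n)} (h : e ∈ edgesAt u) : ¬ e.IsDiag := by
  simp only [edgesAt, mem_image, mem_sdiff, mem_univ, mem_singleton, true_and] at h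
  obtain ⟨w, hw, rfl⟩ := h
  simp only [Sym2.mk_isDiag_iff]
  exact fun h' => hw h'.symm

lemma card_edgesAt (u : Fin n) : (edgesAt u).card ≤ n - 1 := by
  calc (edgesAt u).card ≤ (Finset.univ \ {u} : Finset (Fin n)).card := card_image_le
  _ = n - 1 := by rw [Finset.card_sdiff_of_subset (by simp)]; simp

def nbrs (X : Finset (Sym2 (Fin n))) (u : Fin n) : Finset (Fin n) :=
  univ.filter (fun w => w ≠ u ∧ s(u, w) ∈ X)

def deg (X : Finset (Sym2 (Fin n))) (u : Fin n) : ℕ := (nbrs X u).card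

lemma deg_empty (u : Fin n) : deg (∅ : Finset (Sym2 (Fin n))) u = 0 := by
  simp [deg, nbrs]

def danger (X Y : Finset (Sym2 (Fin n))) : Finset (Sym2 (Fin n)) :=
  univ.filter (fun e => e ∉ X ∪ Y ∧ ∃ x y z : Fin n, x ≠ y ∧ y ≠ z ∧ x ≠ z ∧
    s(x, y) ∈ X ∧ s(y, z) ∈ X ∧ e = s(x, z))

def unclaimedAt (X Y : Finset (Sym2 (Fin n))) (u : Fin n) : Finset (Sym2 (Fin n)) :=
  edgesAt u \ (X ∪ Y)

def need (s : ℕ) (X Y : Finset (Sym2 (Fin n))) (u : Fin n) : ℕ :=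
  s * deg X u - (Y ∩ edgesAt u).card

noncomputable def fixAt (s : ℕ) (X Y : Finset (Sym2 (Fin n))) (u : Fin n) : Finset (Sym2 (Fin n)) :=
  ((unclaimedAt X Y u).toList.take (need s X Y u)).toFinset

noncomputable def eset (s : ℕ) (X Y : Finset (Sym2 (Fin n))) : Finset (Sym2 (Fin n)) :=
  univ.biUnion (fixAt s X Y)

noncomputable def strat (s b : ℕ) (X Y : Finset (Sym2 (Fin n))) : Finset (Sym2 (Fin n)) :=
  if (danger X Y ∪ eset s X Y).card ≤ b then danger X Y ∪ eset s X Y else ∅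

lemma fixAt_subset (s : ℕ) (X Y : Finset (Sym2 (Fin n))) (u : Fin n) :
    fixAt s X Y u ⊆ unclaimedAt X Y u := by
  intro e he
  rw [fixAt, List.mem_toFinset] at he
  exact Finset.mem_toList.mp (List.mem_of_mem_take he)

lemma fixAt_card_le (s : ℕ) (X Y : Finset (Sym2 (Fin n))) (u : Fin n) :
    (fixAt s X Y u).card ≤ need s X Y u := by
  calc (fixAt s X Y u).card ≤ ((unclaimedAt X Y u).toList.take (need s X Y u)).length :=
        List.toFinset_card_le _
  _ ≤ need s X Y u := by rw [List.length_take]; exact min_le_left _ _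

lemma fixAt_cases (s : ℕ) (X Y : Finset (Sym2 (Fin n))) (u : Fin n) :
    unclaimedAt X Y u ⊆ fixAt s X Y u ∨ (fixAt s X Y u).card = need s X Y u := by
  rcases le_or_gt (unclaimedAt X Y u).toList.length (need s X Y u) with h | h
  · left
    intro e he
    rw [fixAt, List.mem_toFinset, List.take_of_length_le h]
    exact Finset.mem_toList.mpr he
  · right
    rw [fixAt, List.toFinset_card_of_nodup
      ((Finset.nodup_toList _).sublist (List.take_sublist _ _)),
      List.length_take]
    omega


lemma strat_subset (s b : ℕ) (X Y : Finset (Sym2 (Fin n))) :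
    strat s b X Y ⊆ danger X Y ∪ eset s X Y := by
  rw [strat]; split
  · exact Finset.Subset.rfl
  · exact empty_subset _

lemma strat_card (s b : ℕ) (X Y : Finset (Sym2 (Fin n))) : (strat s b X Y).card ≤ b := by
  rw [strat]; split
  · assumption
  · simp

lemma danger_spec {X Y : Finset (Sym2 (Fin n))} {e : Sym2 (Fin n)} (h : e ∈ danger X Y) :
    ¬ e.IsDiag ∧ e ∉ X ∪ Y := by
  rw [danger, mem_filter] at h
  obtain ⟨-, hXY, x, y, z, hxy, hyz, hxz, -, -, rfl⟩ := h
  exact ⟨by simp [Sym2.mk_isDiag_iff, hxz], hXY⟩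

lemma eset_spec {s : ℕ} {X Y : Finset (Sym2 (Fin n))} {e : Sym2 (Fin n)} (h : e ∈ eset s X Y) :
    ¬ e.IsDiag ∧ e ∉ X ∪ Y := by
  rw [eset, mem_biUnion] at h
  obtain ⟨u, -, hu⟩ := h
  have h2 := fixAt_subset s X Y u hu
  rw [unclaimedAt, mem_sdiff] at h2
  exact ⟨edgesAt_nondiag h2.1, h2.2⟩

lemma strat_legal (s b : ℕ) (X Y : Finset (Sym2 (Fin n))) :
    ∀ e ∈ strat s b X Y, ¬ e.IsDiag ∧ e ∉ X ∪ Y := by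
  intro e he
  rcases mem_union.mp (strat_subset s b X Y he) with h | h
  · exact danger_spec h
  · exact eset_spec h

def Inv (s : ℕ) (Mr Br : Finset (Sym2 (Fin n))) : Prop :=
  (∀ e ∈ Mr, e ∉ Br) ∧
  (∀ x y z : Fin n, x ≠ y → y ≠ z → x ≠ z → s(x, y) ∈ Mr → s(y, z) ∈ Mr → s(x, z) ∈ Br) ∧
  (∀ u : Fin n, edgesAt u ⊆ Mr ∪ Br ∨ s * deg Mr u ≤ (Br ∩ edgesAt u).card)

lemma deg_mono {X X' : Finset (Sym2 (Fin n))} (h : X ⊆ X') (u : Fin n) :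
    deg X u ≤ deg X' u := by
  apply card_le_card
  intro w hw
  rw [nbrs, mem_filter] at hw ⊢
  exact ⟨hw.1, hw.2.1, h hw.2.2⟩

lemma nbrs_union_single {u v : Fin n} (X : Finset (Sym2 (Fin n))) :
    nbrs (X ∪ {s(u, v)}) u ⊆ insert v (nbrs X u) := by
  intro w hw
  rw [nbrs, mem_filter] at hw
  obtain ⟨-, hwu, hmem⟩ := hw
  rcases mem_union.mp hmem with h | h
  · exact mem_insert_of_mem (mem_filter.mpr ⟨mem_univ _, hwu, h⟩)
  · rw [mem_singleton] at h
    rw [Sym2.congr_right.mp h]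
    exact mem_insert_self v _

lemma nbrs_union_single_other {u v w : Fin n} (X : Finset (Sym2 (Fin n)))
    (hwu : w ≠ u) (hwv : w ≠ v) :
    nbrs (X ∪ {s(u, v)}) w = nbrs X w := by
  unfold nbrs
  apply filter_congr
  intro y _
  constructor
  · rintro ⟨hyw, hmem⟩
    refine ⟨hyw, ?_⟩
    rcases mem_union.mp hmem with h | h
    · exact h
    · rw [mem_singleton, Sym2.eq_iff] at h
      rcases h with ⟨rfl, rfl⟩ | ⟨rfl, rfl⟩
      · exact absurd rfl hwu
      · exact absurd rfl hwv
  · rintro ⟨hyw, hmem⟩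
    exact ⟨hyw, mem_union_left _ hmem⟩

lemma fixAt_empty_of {s : ℕ} {Mr Br X : Finset (Sym2 (Fin n))} {u : Fin n}
    (hdeg : deg X u ≤ deg Mr u) (hMX : Mr ⊆ X)
    (h3 : edgesAt u ⊆ Mr ∪ Br ∨ s * deg Mr u ≤ (Br ∩ edgesAt u).card) :
    fixAt s X Br u = ∅ := by
  rcases h3 with h | h
  · have : unclaimedAt X Br u = ∅ := by
      rw [Finset.eq_empty_iff_forall_notMem]
      intro e he
      rw [unclaimedAt, mem_sdiff] at he
      rcases mem_union.mp (h he.1) with h' | h'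
      · exact he.2 (mem_union_left _ (hMX h'))
      · exact he.2 (mem_union_right _ h')
    exact subset_empty.mp (this ▸ fixAt_subset s X Br u)
  · have hneed : need s X Br u = 0 := by
      have : s * deg X u ≤ s * deg Mr u := Nat.mul_le_mul_left s hdeg
      unfold need
      omega
    have := fixAt_card_le s X Br u
    rw [hneed] at this
    exact card_eq_zero.mp (Nat.le_zero.mp this)

lemma deg_le_d {s : ℕ} (hs : 0 < s) {Mr Br : Finset (Sym2 (Fin n))} {u : Fin n}
    (h : s * deg Mr u ≤ (Br ∩ edgesAt u).card) : deg Mr u ≤ (n - 1) / s := by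
  rw [Nat.le_div_iff_mul_le hs]
  have h1 : (Br ∩ edgesAt u).card ≤ n - 1 :=
    le_trans (card_le_card inter_subset_right) (card_edgesAt u)
  calc deg Mr u * s = s * deg Mr u := Nat.mul_comm _ _
  _ ≤ n - 1 := le_trans h h1

lemma danger_subset_images {Mr Br : Finset (Sym2 (Fin n))} {u v : Fin n}
    (h2 : ∀ x y z : Fin n, x ≠ y → y ≠ z → x ≠ z → s(x, y) ∈ Mr → s(y, z) ∈ Mr → s(x, z) ∈ Br) :
    danger (Mr ∪ {s(u, v)}) Br ⊆
      (nbrs Mr u).image (fun w => s(w, v)) ∪ (nbrs Mr v).image (fun w => s(w, u)) := by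
  intro e he
  rw [danger, mem_filter] at he
  obtain ⟨-, hXY, x, y, z, hxy, hyz, hxz, hA, hB, rfl⟩ := he
  have hnBr : s(x, z) ∉ Br := fun hc => hXY (mem_union_right _ hc)
  rcases mem_union.mp hA with hA | hA
  · rcases mem_union.mp hB with hB | hB
    · exact absurd (h2 x y z hxy hyz hxz hA hB) hnBr
    · -- s(y,z) = s(u,v)
      rw [mem_singleton, Sym2.eq_iff] at hB
      rcases hB with ⟨rfl, rfl⟩ | ⟨rfl, rfl⟩
      · -- y = u, z = v : e = s(x,v), x ∈ nbrs Mr u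
        apply mem_union_left
        apply mem_image.mpr
        exact ⟨x, mem_filter.mpr ⟨mem_univ _, hxy, by rwa [Sym2.eq_swap]⟩, rfl⟩
      · -- y = v, z = u : e = s(x,u), x ∈ nbrs Mr v
        apply mem_union_right
        apply mem_image.mpr
        exact ⟨x, mem_filter.mpr ⟨mem_univ _, hxy, by rwa [Sym2.eq_swap]⟩, rfl⟩
  · rw [mem_singleton, Sym2.eq_iff] at hA
    rcases hA with ⟨rfl, rfl⟩ | ⟨rfl, rfl⟩ <;>
      rcases mem_union.mp hB with hB | hB
    · -- x = u, y = v, s(y,z) ∈ Mr : e = s(x,z) = s(z,x), z ∈ nbrs Mr y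
      apply mem_union_right
      apply mem_image.mpr
      exact ⟨z, mem_filter.mpr ⟨mem_univ _, Ne.symm hyz, hB⟩, Sym2.eq_swap⟩
    · rw [mem_singleton, Sym2.eq_iff] at hB
      rcases hB with ⟨h1', h2'⟩ | ⟨h1', h2'⟩ <;>
        first
        | exact absurd h2'.symm hyz
        | exact absurd h2'.symm hxz
    · -- x = v, y = u, s(y,z) ∈ Mr : z ∈ nbrs Mr y = nbrs Mr u
      apply mem_union_left
      apply mem_image.mpr
      exact ⟨z, mem_filter.mpr ⟨mem_univ _, Ne.symm hyz, hB⟩, Sym2.eq_swap⟩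
    · rw [mem_singleton, Sym2.eq_iff] at hB
      rcases hB with ⟨h1', h2'⟩ | ⟨h1', h2'⟩ <;>
        first
        | exact absurd h2'.symm hyz
        | exact absurd h2'.symm hxz

lemma step {s b : ℕ} (hs : 0 < s)
    (hb2 : 2 * ((n - 1) / s) + 2 * s ≤ b)
    {Mr Br M' : Finset (Sym2 (Fin n))}
    (hinv : Inv s Mr Br)
    (hsub : Mr ⊆ M') (hcard : (M' \ Mr).card ≤ 1)
    (hleg : ∀ e ∈ M' \ Mr, ¬ e.IsDiag ∧ e ∉ Br) :
    Inv s M' (Br ∪ strat s b M' Br) := by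
  obtain ⟨h1, h2, h3⟩ := hinv
  -- the total number of claimed edges is within the budget (no truncation)
  have key : (danger M' Br ∪ eset s M' Br).card ≤ b := by
    by_cases hM : M' = Mr
    · subst hM
      have hd : danger M' Br = ∅ := by
        rw [Finset.eq_empty_iff_forall_notMem]
        intro e he
        rw [danger, mem_filter] at he
        obtain ⟨-, hXY, x, y, z, hxy, hyz, hxz, hA, hB, rfl⟩ := he
        exact hXY (mem_union_right _ (h2 x y z hxy hyz hxz hA hB))
      have he : eset s M' Br = ∅ := by
        rw [Finset.eq_empty_iff_forall_notMem]
        intro e he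
        rw [eset, mem_biUnion] at he
        obtain ⟨u, -, hu⟩ := he
        rw [fixAt_empty_of (le_refl _) Finset.Subset.rfl (h3 u)] at hu
        exact notMem_empty e hu
      simp [hd, he]
    · -- there is a (unique) new edge
      have hne : (M' \ Mr).Nonempty := by
        rw [Finset.nonempty_iff_ne_empty]
        intro hc
        exact hM (Finset.Subset.antisymm (Finset.sdiff_eq_empty_iff_subset.mp hc) hsub)
      obtain ⟨e₀, he₀⟩ := hne
      have hsingle : M' \ Mr = {e₀} :=
        Finset.eq_singleton_iff_unique_mem.mpr ⟨he₀, fun a ha => Finset.card_le_one.mp hcard a ha e₀ he₀⟩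
      obtain ⟨u, v, rfl⟩ : ∃ u v : Fin n, e₀ = s(u, v) := by
        induction e₀ using Sym2.ind with | _ x y => exact ⟨x, y, rfl⟩
      obtain ⟨hdiag, hBr0⟩ := hleg _ he₀
      have huv : u ≠ v := fun hc => hdiag (by rw [Sym2.mk_isDiag_iff]; exact hc)
      have hM'eq : M' = Mr ∪ {s(u, v)} := by
        rw [← hsingle, Finset.union_sdiff_of_subset hsub]
      have he₀Mr : s(u, v) ∉ Mr := (mem_sdiff.mp he₀).2
      -- degree bounds at u and v
      have hdu : s * deg Mr u ≤ (Br ∩ edgesAt u).card := by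
        rcases h3 u with h | h
        · exfalso
          rcases mem_union.mp (h (mem_edgesAt (Ne.symm huv))) with h' | h'
          · exact he₀Mr h'
          · exact hBr0 h'
        · exact h
      have hdv : s * deg Mr v ≤ (Br ∩ edgesAt v).card := by
        rcases h3 v with h | h
        · exfalso
          rcases mem_union.mp (h (mem_edgesAt huv)) with h' | h'
          · exact he₀Mr (by rwa [Sym2.eq_swap] at h')
          · exact hBr0 (by rwa [Sym2.eq_swap] at h')
        · exact h
      have hdu' : deg Mr u ≤ (n - 1) / s := deg_le_d hs hdu
      have hdv' : deg Mr v ≤ (n - 1) / s := deg_le_d hs hdv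
      -- danger bound
      have hdanger : (danger M' Br).card ≤ (n - 1) / s + (n - 1) / s := by
        rw [hM'eq]
        calc (danger (Mr ∪ {s(u, v)}) Br).card
            ≤ ((nbrs Mr u).image (fun w => s(w, v)) ∪ (nbrs Mr v).image (fun w => s(w, u))).card :=
              card_le_card (danger_subset_images h2)
        _ ≤ ((nbrs Mr u).image (fun w => s(w, v))).card + ((nbrs Mr v).image (fun w => s(w, u))).card :=
              card_union_le _ _
        _ ≤ deg Mr u + deg Mr v := Nat.add_le_add card_image_le card_image_le
        _ ≤ (n - 1) / s + (n - 1) / s := Nat.add_le_add hdu' hdv'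
      -- eset bound
      have hfix : ∀ w : Fin n, w ≠ u → w ≠ v → fixAt s M' Br w = ∅ := by
        intro w hwu hwv
        apply fixAt_empty_of _ (hM'eq ▸ subset_union_left) (h3 w)
        rw [hM'eq]
        unfold deg
        rw [nbrs_union_single_other Mr hwu hwv]
      have hfixu : ∀ w : Fin n, (fixAt s M' Br w).card ≤ s := by
        intro w
        by_cases hwu : w = u
        · subst hwu
          have hdegle : deg M' w ≤ deg Mr w + 1 := by
            rw [hM'eq]
            calc deg (Mr ∪ {s(w, v)}) w ≤ (insert v (nbrs Mr w)).card :=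
              card_le_card (nbrs_union_single Mr)
            _ ≤ deg Mr w + 1 := card_insert_le _ _
          have := fixAt_card_le s M' Br w
          have hneed : need s M' Br w ≤ s := by
            have h2' : s * deg M' w ≤ s * deg Mr w + s := by
              calc s * deg M' w ≤ s * (deg Mr w + 1) := Nat.mul_le_mul_left s hdegle
              _ = s * deg Mr w + s := by ring
            unfold need
            omega
          omega
        · by_cases hwv : w = v
          · subst hwv
            have hdegle : deg M' w ≤ deg Mr w + 1 := by
              rw [hM'eq]
              have : Mr ∪ {s(u, w)} = Mr ∪ {s(w, u)} := by rw [Sym2.eq_swap]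
              rw [this]
              calc deg (Mr ∪ {s(w, u)}) w ≤ (insert u (nbrs Mr w)).card :=
                card_le_card (nbrs_union_single Mr)
              _ ≤ deg Mr w + 1 := card_insert_le _ _
            have := fixAt_card_le s M' Br w
            have hneed : need s M' Br w ≤ s := by
              have h2' : s * deg M' w ≤ s * deg Mr w + s := by
                calc s * deg M' w ≤ s * (deg Mr w + 1) := Nat.mul_le_mul_left s hdegle
                _ = s * deg Mr w + s := by ring
              have hcnt : s * deg Mr w ≤ (Br ∩ edgesAt w).card := hdv
              unfold need
              omega
            omega
          · rw [hfix w hwu hwv]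
            simp
      -- hneed for u also used hdu; redo for u branch: fix
      have heset : (eset s M' Br).card ≤ s + s := by
        have hsub2 : eset s M' Br ⊆ fixAt s M' Br u ∪ fixAt s M' Br v := by
          intro e he
          rw [eset, mem_biUnion] at he
          obtain ⟨w, -, hw⟩ := he
          by_cases hwu : w = u
          · exact mem_union_left _ (hwu ▸ hw)
          · by_cases hwv : w = v
            · exact mem_union_right _ (hwv ▸ hw)
            · rw [hfix w hwu hwv] at hw
              exact absurd hw (notMem_empty e)
        calc (eset s M' Br).card ≤ (fixAt s M' Br u ∪ fixAt s M' Br v).card := card_le_card hsub2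
        _ ≤ (fixAt s M' Br u).card + (fixAt s M' Br v).card := card_union_le _ _
        _ ≤ s + s := Nat.add_le_add (hfixu u) (hfixu v)
      calc (danger M' Br ∪ eset s M' Br).card
          ≤ (danger M' Br).card + (eset s M' Br).card := card_union_le _ _
      _ ≤ ((n - 1) / s + (n - 1) / s) + (s + s) := Nat.add_le_add hdanger heset
      _ ≤ b := by omega
  have hnt : strat s b M' Br = danger M' Br ∪ eset s M' Br := by
    rw [strat, if_pos key]
  refine ⟨?_, ?_, ?_⟩
  · -- disjointness
    intro e he hmem
    rcases mem_union.mp hmem with h | h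
    · by_cases heMr : e ∈ Mr
      · exact h1 e heMr h
      · exact (hleg e (mem_sdiff.mpr ⟨he, heMr⟩)).2 h
    · exact (strat_legal s b M' Br e h).2 (mem_union_left _ he)
  · -- blocking invariant
    intro x y z hxy hyz hxz hxyM hyzM
    by_cases hBr : s(x, z) ∈ Br
    · exact mem_union_left _ hBr
    have hone : ∀ a ∈ M' \ Mr, ∀ a' ∈ M' \ Mr, a = a' := Finset.card_le_one.mp hcard
    have hnotM : s(x, z) ∉ M' := by
      intro hmem
      by_cases hxzMr : s(x, z) ∈ Mr
      · by_cases hxyMr : s(x, y) ∈ Mr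
        · by_cases hyzMr : s(y, z) ∈ Mr
          · exact hBr (h2 x y z hxy hyz hxz hxyMr hyzMr)
          · have hnew : s(y, z) ∈ M' \ Mr := mem_sdiff.mpr ⟨hyzM, hyzMr⟩
            exact (hleg _ hnew).2
              (h2 y x z (Ne.symm hxy) hxz hyz (by rwa [Sym2.eq_swap]) hxzMr)
        · have hnew : s(x, y) ∈ M' \ Mr := mem_sdiff.mpr ⟨hxyM, hxyMr⟩
          have hyzMr : s(y, z) ∈ Mr := by
            by_contra hc
            have heq := hone _ hnew _ (mem_sdiff.mpr ⟨hyzM, hc⟩)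
            rw [Sym2.eq_iff] at heq
            rcases heq with ⟨h', -⟩ | ⟨h', -⟩
            · exact hxy h'
            · exact hxz h'
          exact (hleg _ hnew).2
            (h2 x z y hxz (Ne.symm hyz) hxy hxzMr (by rwa [Sym2.eq_swap]))
      · have hnew : s(x, z) ∈ M' \ Mr := mem_sdiff.mpr ⟨hmem, hxzMr⟩
        have hxyMr : s(x, y) ∈ Mr := by
          by_contra hc
          have heq := hone _ (mem_sdiff.mpr ⟨hxyM, hc⟩) _ hnew
          rw [Sym2.eq_iff] at heq
          rcases heq with ⟨-, h'⟩ | ⟨h', -⟩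
          · exact hyz h'
          · exact hxz h'
        have hyzMr : s(y, z) ∈ Mr := by
          by_contra hc
          have heq := hone _ (mem_sdiff.mpr ⟨hyzM, hc⟩) _ hnew
          rw [Sym2.eq_iff] at heq
          rcases heq with ⟨h', -⟩ | ⟨h', -⟩
          · exact hxy h'.symm
          · exact hyz h'
        exact (hleg _ hnew).2 (h2 x y z hxy hyz hxz hxyMr hyzMr)
    have hdang : s(x, z) ∈ danger M' Br := by
      rw [danger, mem_filter]
      refine ⟨mem_univ _, fun hc => (mem_union.mp hc).elim hnotM hBr,
        x, y, z, hxy, hyz, hxz, hxyM, hyzM, rfl⟩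
    exact mem_union_right _ (hnt ▸ mem_union_left _ hdang)
  · -- degree invariant
    intro w
    rcases fixAt_cases s M' Br w with hcase | hcase
    · left
      intro e he
      by_cases hc : e ∈ M' ∪ Br
      · rcases mem_union.mp hc with h | h
        · exact mem_union_left _ h
        · exact mem_union_right _ (mem_union_left _ h)
      · have hu : e ∈ unclaimedAt M' Br w := mem_sdiff.mpr ⟨he, hc⟩
        have hf : e ∈ fixAt s M' Br w := hcase hu
        have : e ∈ strat s b M' Br := by
          rw [hnt]
          exact mem_union_right _ (mem_biUnion.mpr ⟨w, mem_univ _, hf⟩)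
        exact mem_union_right _ (mem_union_right _ this)
    · right
      have hfsub := fixAt_subset s M' Br w
      have hdisj : Disjoint (Br ∩ edgesAt w) (fixAt s M' Br w) := by
        rw [Finset.disjoint_left]
        intro e he hf
        have := mem_sdiff.mp (hfsub hf)
        exact this.2 (mem_union_right _ (mem_inter.mp he).1)
      have hsub2 : (Br ∩ edgesAt w) ∪ fixAt s M' Br w ⊆
          (Br ∪ strat s b M' Br) ∩ edgesAt w := by
        intro e he
        rcases mem_union.mp he with h | h
        · exact mem_inter.mpr ⟨mem_union_left _ (mem_inter.mp h).1, (mem_inter.mp h).2⟩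
        · have h' := mem_sdiff.mp (hfsub h)
          refine mem_inter.mpr ⟨mem_union_right _ ?_, h'.1⟩
          rw [hnt]
          exact mem_union_right _ (mem_biUnion.mpr ⟨w, mem_univ _, h⟩)
      calc s * deg M' w ≤ (Br ∩ edgesAt w).card + need s M' Br w := by
            unfold need; omega
      _ = ((Br ∩ edgesAt w) ∪ fixAt s M' Br w).card := by
            rw [card_union_of_disjoint hdisj, hcase]
      _ ≤ ((Br ∪ strat s b M' Br) ∩ edgesAt w).card := card_le_card hsub2

lemma budget {n b : ℕ} (hn : 1 ≤ n) (hb : (b : ℝ) ≥ 4 * Real.sqrt n) :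
    2 * ((n - 1) / Nat.sqrt n) + 2 * Nat.sqrt n ≤ b := by
  set S := Nat.sqrt n with hS
  have hS1 : 1 ≤ S := Nat.sqrt_pos.mpr hn
  have hsq : ((S : ℝ)) * S ≤ n := by
    have h := Nat.sqrt_le' n
    rw [pow_two] at h
    exact_mod_cast h
  have h1 : (S : ℝ) ≤ Real.sqrt n := by
    rw [show ((S : ℝ)) = Real.sqrt (S * S) by rw [Real.sqrt_mul_self (by positivity)]]
    exact Real.sqrt_le_sqrt hsq
  have h2 : (n : ℝ) < ((S : ℝ) + 1) * ((S : ℝ) + 1) := by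
    exact_mod_cast Nat.lt_succ_sqrt n
  have h3 : Real.sqrt n * Real.sqrt n = n := Real.mul_self_sqrt (by positivity)
  have h2' : Real.sqrt n < (S : ℝ) + 1 := by nlinarith [Real.sqrt_nonneg (n : ℝ)]
  have hd : (((n - 1) / S : ℕ) : ℝ) ≤ ((n : ℝ) - 1) / S := by
    have h := Nat.cast_div_le (α := ℝ) (m := n - 1) (n := S)
    rwa [Nat.cast_sub hn, Nat.cast_one] at h
  have hkey : ((n : ℝ) - 1) / S ≤ 2 * Real.sqrt n - S := by
    rw [div_le_iff₀ (by positivity)]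
    nlinarith [h1, h2', h3]
  have h5 : ((2 * ((n - 1) / S) + 2 * S : ℕ) : ℝ) ≤ (b : ℝ) := by
    push_cast
    linarith [hd, hkey]
  exact_mod_cast h5

end Stmt7

theorem stmt_7 (n b : ℕ) (hn : 3 ∣ n) (hb : (b : ℝ) ≥ 4 * Real.sqrt n) :
    -- Breaker has a (positional) strategy σ: given the edges claimed by Maker
    -- (including Maker's newest edge) and by Breaker, σ outputs Breaker's next claim.
    ∃ σ : Finset (Sym2 (Fin n)) → Finset (Sym2 (Fin n)) → Finset (Sym2 (Fin n)),
      -- σ is legal: at most b edges, all non-loops, and all unclaimed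
      (∀ X Y : Finset (Sym2 (Fin n)), (σ X Y).card ≤ b ∧
        ∀ e ∈ σ X Y, ¬ e.IsDiag ∧ e ∉ X ∪ Y) ∧
      -- in any play consistent with σ, Maker's graph never contains a triangle
      ∀ M B : ℕ → Finset (Sym2 (Fin n)),
        M 0 = ∅ → B 0 = ∅ →
        -- in each round Maker claims at most one new unclaimed non-loop edge
        (∀ r, M r ⊆ M (r + 1) ∧ (M (r + 1) \ M r).card ≤ 1 ∧
          ∀ e ∈ M (r + 1) \ M r, ¬ e.IsDiag ∧ e ∉ B r) →
        -- Breaker then responds according to σ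
        (∀ r, B (r + 1) = B r ∪ σ (M (r + 1)) (B r)) →
        ∀ r, ¬ HasTriangle (M r) := by
  rcases Nat.eq_zero_or_pos n with hn0 | hnpos
  · subst hn0
    refine ⟨fun _ _ => ∅, fun X Y => ⟨by simp, by simp⟩, ?_⟩
    intro M B _ _ _ _ r htri
    obtain ⟨x, -⟩ := htri
    exact x.elim0
  · have hs : 0 < Nat.sqrt n := Nat.sqrt_pos.mpr hnpos
    have hb2 := Stmt7.budget hnpos hb
    refine ⟨Stmt7.strat (Nat.sqrt n) b,
      fun X Y => ⟨Stmt7.strat_card _ b X Y, Stmt7.strat_legal _ b X Y⟩, ?_⟩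
    intro M B hM0 hB0 hMstep hBstep
    have hinv : ∀ r, Stmt7.Inv (Nat.sqrt n) (M r) (B r) := by
      intro r
      induction r with
      | zero =>
        rw [hM0, hB0]
        exact ⟨by simp, by simp, fun u => Or.inr (by simp [Stmt7.deg_empty])⟩
      | succ r ih =>
        rw [hBstep r]
        exact Stmt7.step hs hb2 ih (hMstep r).1 (hMstep r).2.1 (hMstep r).2.2
    intro r htri
    obtain ⟨x, y, z, hxy, hyz, hxz, e1, e2, e3⟩ := htri
    obtain ⟨i1, i2, -⟩ := hinv r
    exact i1 _ e3 (i2 x y z hxy hyz hxz e1 e2)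
end

section
/- In the (1:b) Maker-Breaker triangle-avoidance game on K_n played under the strategy where, after each Maker move uv, Breaker claims √n edges at u and √n edges at v: Maker never claims more than √n edges at any given vertex, and in each round the number of unclaimed edges forming a triangle with two Maker edges (one of which is the edge uv just played) is at most 2√n. -/
open Finset

/-- The edges of `F` incident to a vertex `w`. -/
def edgesAt {n : ℕ} (F : Finset (Sym2 (Fin n))) (w : Fin n) : Finset (Sym2 (Fin n)) :=
  F.filter (fun e => w ∈ e)

lemma edgesAt_mono {n : ℕ} {F G : Finset (Sym2 (Fin n))} (h : F ⊆ G) (w : Fin n) :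
    edgesAt F w ⊆ edgesAt G w := filter_subset_filter _ h

lemma edgesAt_union {n : ℕ} (F G : Finset (Sym2 (Fin n))) (w : Fin n) :
    edgesAt (F ∪ G) w = edgesAt F w ∪ edgesAt G w := filter_union _ _ _

lemma edgesAt_card_le {n : ℕ} (F : Finset (Sym2 (Fin n))) (w : Fin n) :
    (edgesAt F w).card ≤ n := by
  have h : edgesAt F w ⊆ (univ : Finset (Fin n)).image (fun x => s(w, x)) := by
    intro e he
    simp only [edgesAt, mem_filter] at he
    exact mem_image.2 ⟨Sym2.Mem.other he.2, mem_univ _, Sym2.other_spec he.2⟩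
  calc (edgesAt F w).card ≤ _ := card_le_card h
    _ ≤ (univ : Finset (Fin n)).card := card_image_le
    _ = n := by simp

theorem stmt_8 (n b : ℕ) (M B : ℕ → Finset (Sym2 (Fin n)))
    (hM0 : M 0 = ∅) (hB0 : B 0 = ∅)
    (hBmono : ∀ r, B r ⊆ B (r + 1))
    (hdisj : ∀ r, Disjoint (M r) (B r))
    -- in each round, either the game is over, or Maker claims one unclaimed edge uv
    -- and Breaker answers by claiming at least √n edges at each of u and v
    -- (unless all edges at that vertex are already claimed)
    (hplay : ∀ r, (M (r + 1) = M r ∧ B (r + 1) = B r) ∨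
      ∃ u v : Fin n, u ≠ v ∧ s(u, v) ∉ M r ∪ B r ∧ M (r + 1) = insert s(u, v) (M r) ∧
        ∀ w ∈ ({u, v} : Finset (Fin n)),
          ((edgesAt (B (r + 1) \ B r) w).card : ℝ) ≥ Real.sqrt n ∨
          ∀ x : Fin n, x ≠ w → s(w, x) ∈ M (r + 1) ∪ B (r + 1)) :
    -- (1) Maker never claims more than √n edges at any vertex
    (∀ r (v : Fin n), ((edgesAt (M r) v).card : ℝ) ≤ Real.sqrt n) ∧
    -- (2) in each round, at most 2√n unclaimed edges form a triangle with two Maker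
    -- edges one of which is the edge uv just played
    (∀ r (u v : Fin n), u ≠ v → s(u, v) ∉ M r → M (r + 1) = insert s(u, v) (M r) →
      (((univ : Finset (Sym2 (Fin n))).filter (fun f =>
          f ∉ M (r + 1) ∪ B r ∧ ∃ y : Fin n, y ≠ u ∧ y ≠ v ∧
            ((f = s(u, y) ∧ s(v, y) ∈ M (r + 1)) ∨
             (f = s(v, y) ∧ s(u, y) ∈ M (r + 1))))).card : ℝ) ≤ 2 * Real.sqrt n) := by
  have hsq0 : (0:ℝ) ≤ Real.sqrt n := Real.sqrt_nonneg n
  have hsqsq : Real.sqrt n * Real.sqrt n = (n:ℝ) := Real.mul_self_sqrt (by positivity)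
  -- Breaker's incidence count is monotone
  have hTmono : ∀ r (w : Fin n),
      ((edgesAt (B r) w).card : ℝ) ≤ ((edgesAt (B (r+1)) w).card : ℝ) := fun r w => by
    exact_mod_cast card_le_card (edgesAt_mono (hBmono r) w)
  -- Main invariant
  have inv : ∀ r (w : Fin n),
      (((edgesAt (M r) w).card : ℝ) * Real.sqrt n ≤ ((edgesAt (B r) w).card : ℝ)) ∨
      ((∀ x : Fin n, x ≠ w → s(w, x) ∈ M r ∪ B r) ∧
        (((edgesAt (M r) w).card : ℝ) - 1) * Real.sqrt n ≤ ((edgesAt (B r) w).card : ℝ)) := by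
    intro r
    induction r with
    | zero => intro w; left; simp [hM0, hB0, edgesAt]
    | succ r ih =>
      intro w
      rcases hplay r with ⟨hMe, hBe⟩ | ⟨u, v, huv, hnew, hM, hbr⟩
      · rw [hMe, hBe]; exact ih w
      · by_cases hw : w = u ∨ w = v
        · -- w is an endpoint of the new edge
          have hwmem : w ∈ s(u, v) := Sym2.mem_iff.2 hw
          have hnotM : s(u, v) ∉ edgesAt (M r) w := fun h => by
            have := (mem_filter.1 h).1
            exact hnew (mem_union_left _ this)
          have hScard : (edgesAt (M (r+1)) w).card = (edgesAt (M r) w).card + 1 := by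
            rw [hM]
            unfold edgesAt
            rw [filter_insert, if_pos hwmem]
            exact card_insert_of_notMem hnotM
          -- rule out the saturated case of the IH
          have hL : ((edgesAt (M r) w).card : ℝ) * Real.sqrt n ≤ ((edgesAt (B r) w).card : ℝ) := by
            rcases ih w with h | ⟨hsat, _⟩
            · exact h
            · exfalso
              rcases hw with rfl | rfl
              · exact hnew (hsat v huv.symm)
              · have := hsat u huv
                rw [Sym2.eq_swap] at this
                exact hnew this
          have hwuv : w ∈ ({u, v} : Finset (Fin n)) := by
            simp only [mem_insert, mem_singleton]; exact hw
          rcases hbr w hwuv with hbig | hsat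
          · -- Breaker claimed ≥ √n new edges at w
            left
            have hdB : Disjoint (edgesAt (B r) w) (edgesAt (B (r+1) \ B r) w) :=
              Disjoint.mono (filter_subset _ _) (filter_subset _ _) disjoint_sdiff
            have hBsplit : edgesAt (B (r+1)) w =
                edgesAt (B r) w ∪ edgesAt (B (r+1) \ B r) w := by
              rw [← edgesAt_union, union_sdiff_of_subset (hBmono r)]
            have hTcard : ((edgesAt (B (r+1)) w).card : ℝ) =
                ((edgesAt (B r) w).card : ℝ) + ((edgesAt (B (r+1) \ B r) w).card : ℝ) := by
              rw [hBsplit, card_union_of_disjoint hdB]; push_cast; ring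
            rw [hScard, hTcard]
            push_cast
            nlinarith [hbig]
          · -- vertex w is saturated after this round
            right
            refine ⟨hsat, ?_⟩
            rw [hScard]
            push_cast
            have := hTmono r w
            nlinarith
        · -- w is not an endpoint: nothing changes at w
          push_neg at hw
          have hwmem : w ∉ s(u, v) := fun h => by
            rcases Sym2.mem_iff.1 h with h | h
            · exact hw.1 h
            · exact hw.2 h
          have hScard : edgesAt (M (r+1)) w = edgesAt (M r) w := by
            rw [hM]; unfold edgesAt; rw [filter_insert, if_neg hwmem]
          have hMsub : M r ⊆ M (r+1) := by rw [hM]; exact subset_insert _ _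
          rcases ih w with h | ⟨hsat, h⟩
          · left; rw [hScard]; exact h.trans (hTmono r w)
          · right
            refine ⟨fun x hx => ?_, by rw [hScard]; exact h.trans (hTmono r w)⟩
            rcases mem_union.1 (hsat x hx) with h' | h'
            · exact mem_union_left _ (hMsub h')
            · exact mem_union_right _ (hBmono r h')
  -- Part (1)
  have part1 : ∀ r (v : Fin n), ((edgesAt (M r) v).card : ℝ) ≤ Real.sqrt n := by
    intro r w
    have hdisj' : Disjoint (edgesAt (M r) w) (edgesAt (B r) w) :=
      Disjoint.mono (filter_subset _ _) (filter_subset _ _) (hdisj r)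
    have hST : (edgesAt (M r) w).card + (edgesAt (B r) w).card ≤ n := by
      rw [← card_union_of_disjoint hdisj', ← edgesAt_union]
      exact edgesAt_card_le _ _
    have hST' : ((edgesAt (M r) w).card : ℝ) + ((edgesAt (B r) w).card : ℝ) ≤ (n:ℝ) := by
      exact_mod_cast hST
    rcases inv r w with h | ⟨_, h⟩ <;> nlinarith
  refine ⟨part1, ?_⟩
  -- Part (2)
  intro r u v huv hnew hM
  set Au : Finset (Sym2 (Fin n)) :=
    ((univ : Finset (Fin n)).filter (fun y => y ≠ u ∧ y ≠ v ∧ s(v, y) ∈ M (r+1))).image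
      (fun y => s(u, y)) with hAu
  set Av : Finset (Sym2 (Fin n)) :=
    ((univ : Finset (Fin n)).filter (fun y => y ≠ u ∧ y ≠ v ∧ s(u, y) ∈ M (r+1))).image
      (fun y => s(v, y)) with hAv
  have hsub : (univ : Finset (Sym2 (Fin n))).filter (fun f =>
          f ∉ M (r + 1) ∪ B r ∧ ∃ y : Fin n, y ≠ u ∧ y ≠ v ∧
            ((f = s(u, y) ∧ s(v, y) ∈ M (r + 1)) ∨
             (f = s(v, y) ∧ s(u, y) ∈ M (r + 1)))) ⊆ Au ∪ Av := by
    intro f hf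
    obtain ⟨-, y, hyu, hyv, hcase⟩ := (mem_filter.1 hf).2
    rcases hcase with ⟨rfl, hmem⟩ | ⟨rfl, hmem⟩
    · exact mem_union_left _ (mem_image.2 ⟨y, mem_filter.2 ⟨mem_univ _, hyu, hyv, hmem⟩, rfl⟩)
    · exact mem_union_right _ (mem_image.2 ⟨y, mem_filter.2 ⟨mem_univ _, hyu, hyv, hmem⟩, rfl⟩)
  have hcardAu : (Au.card : ℝ) ≤ Real.sqrt n := by
    have h1 : Au.card ≤ ((univ : Finset (Fin n)).filter
        (fun y => y ≠ u ∧ y ≠ v ∧ s(v, y) ∈ M (r+1))).card := card_image_le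
    have h2 : ((univ : Finset (Fin n)).filter
        (fun y => y ≠ u ∧ y ≠ v ∧ s(v, y) ∈ M (r+1))).card ≤ (edgesAt (M (r+1)) v).card := by
      apply card_le_card_of_injOn (fun y => s(v, y))
      · intro y hy
        obtain ⟨-, -, -, hm⟩ := mem_filter.1 hy
        exact mem_filter.2 ⟨hm, Sym2.mem_mk_left v y⟩
      · intro a _ c _ h
        exact Sym2.congr_right.1 h
    calc (Au.card : ℝ) ≤ ((edgesAt (M (r+1)) v).card : ℝ) := by exact_mod_cast h1.trans h2
      _ ≤ Real.sqrt n := part1 (r+1) v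
  have hcardAv : (Av.card : ℝ) ≤ Real.sqrt n := by
    have h1 : Av.card ≤ ((univ : Finset (Fin n)).filter
        (fun y => y ≠ u ∧ y ≠ v ∧ s(u, y) ∈ M (r+1))).card := card_image_le
    have h2 : ((univ : Finset (Fin n)).filter
        (fun y => y ≠ u ∧ y ≠ v ∧ s(u, y) ∈ M (r+1))).card ≤ (edgesAt (M (r+1)) u).card := by
      apply card_le_card_of_injOn (fun y => s(u, y))
      · intro y hy
        obtain ⟨-, -, -, hm⟩ := mem_filter.1 hy
        exact mem_filter.2 ⟨hm, Sym2.mem_mk_left u y⟩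
      · intro a _ c _ h
        exact Sym2.congr_right.1 h
    calc (Av.card : ℝ) ≤ ((edgesAt (M (r+1)) u).card : ℝ) := by exact_mod_cast h1.trans h2
      _ ≤ Real.sqrt n := part1 (r+1) u
  calc (((univ : Finset (Sym2 (Fin n))).filter (fun f =>
          f ∉ M (r + 1) ∪ B r ∧ ∃ y : Fin n, y ≠ u ∧ y ≠ v ∧
            ((f = s(u, y) ∧ s(v, y) ∈ M (r + 1)) ∨
             (f = s(v, y) ∧ s(u, y) ∈ M (r + 1))))).card : ℝ)
      ≤ ((Au ∪ Av).card : ℝ) := by exact_mod_cast card_le_card hsub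
    _ ≤ (Au.card : ℝ) + (Av.card : ℝ) := by exact_mod_cast card_union_le Au Av
    _ ≤ 2 * Real.sqrt n := by linarith
end

section
/- Let F be a graph and Y ⊆ V(F). Then there is a partition V(F) = V_1 ∪ ... ∪ V_{8Δ(F)} into 8Δ(F) parts such that each part is an independent set in F, any two parts differ in size by at most one, and for any two indices i, j the sets V_i ∩ Y and V_j ∩ Y differ in size by at most one. -/
/-!
Colour the smaller of `Y` and `Yᶜ` first and the other one afterwards, each time with class
sizes prescribed to be as even as possible, the second targets chosen so that the totals are
again as even as possible. In the second round a vertex must avoid the colours of its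
neighbours coloured in the first round, so both rounds are equitable list colourings in which
every vertex has at most `Δ` neighbours and forbidden colours together, and no colour is
forbidden at more than `Δ (q + 1)` vertices when the targets lie in `{q, q + 1}`.

With `6Δ` colours such a colouring exists: take a proper list colouring minimising
`∑ i, (|class i| - target i)²`. If some class `P` is above target and some class `C` below,
moving one vertex shows that a vertex `w ∈ P` is blocked from every class below target, and
moving two vertices shows that every other vertex is blocked from `C` unless `w` is blocked
from its (not overfull) class. So all but `Δ (q + 1)` vertices are blocked from the small
class `C`, which bounds `|V|` by `Δ (3q + 2)`, whereas the targets force `|V| ≥ 6Δq`.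
-/

open Finset

namespace EquitableColoring

variable {V ι : Type*}

section ListColoring

variable (G : SimpleGraph V) (s : Finset V) (L : V → Finset ι)

def IsListColoringOn (g : V → ι) : Prop :=
  (∀ u ∈ s, ∀ v ∈ s, G.Adj u v → g u ≠ g v) ∧ ∀ v ∈ s, g v ∉ L v

def Blocked (g : V → ι) (v : V) (i : ι) : Prop :=
  (∃ u ∈ s, g u = i ∧ G.Adj v u) ∨ i ∈ L v

instance [DecidableRel G.Adj] [DecidableEq ι] (g : V → ι) (v : V) :
    DecidablePred (Blocked G s L g v) := fun _ => by
  unfold Blocked; infer_instance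

variable {G s L}

lemma IsListColoringOn.update [DecidableEq V] {g : V → ι} (hg : IsListColoringOn G s L g)
    {x : V} {c : ι} (hc : ¬Blocked G s L g x c) :
    IsListColoringOn G (insert x s) L (Function.update g x c) := by
  have hnbr : ∀ u ∈ s, G.Adj x u → g u ≠ c := fun u hu hxu h => hc (.inl ⟨u, hu, h, hxu⟩)
  constructor
  · intro u hu v hv huv
    by_cases hux : u = x <;> by_cases hvx : v = x
    · exact (G.irrefl (hux ▸ hvx ▸ huv)).elim
    · subst hux
      rw [Function.update_self, Function.update_of_ne hvx]
      exact (hnbr v (mem_of_mem_insert_of_ne hv hvx) huv).symm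
    · subst hvx
      rw [Function.update_self, Function.update_of_ne hux]
      exact hnbr u (mem_of_mem_insert_of_ne hu hux) huv.symm
    · rw [Function.update_of_ne hux, Function.update_of_ne hvx]
      exact hg.1 u (mem_of_mem_insert_of_ne hu hux) v (mem_of_mem_insert_of_ne hv hvx) huv
  · intro v hv
    by_cases hvx : v = x
    · subst hvx
      simpa using fun h => hc (.inr h)
    · simpa [Function.update_of_ne hvx] using hg.2 v (mem_of_mem_insert_of_ne hv hvx)

variable [DecidableRel G.Adj]

lemma card_filter_exists_adj_le {Δ : ℕ} (A : Finset V)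
    (hA : ∀ u ∈ A, #{v ∈ s | G.Adj u v} ≤ Δ) :
    #{v ∈ s | ∃ u ∈ A, G.Adj v u} ≤ Δ * #A := by
  classical
  calc #{v ∈ s | ∃ u ∈ A, G.Adj v u} ≤ #(A.biUnion fun u => {v ∈ s | G.Adj u v}) := by
        refine card_le_card fun v hv => ?_
        obtain ⟨hv, u, hu, hvu⟩ := mem_filter.1 hv
        exact mem_biUnion.2 ⟨u, hu, mem_filter.2 ⟨hv, hvu.symm⟩⟩
    _ ≤ ∑ u ∈ A, #{v ∈ s | G.Adj u v} := card_biUnion_le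
    _ ≤ Δ * #A := by
        rw [mul_comm]; exact sum_le_card_nsmul _ _ _ hA

variable [DecidableEq ι]

lemma card_blocked_le [Fintype ι] (g : V → ι) (v : V) :
    #{i | Blocked G s L g v i} ≤ #{u ∈ s | G.Adj v u} + #(L v) := by
  calc #{i | Blocked G s L g v i} ≤ #({u ∈ s | G.Adj v u}.image g ∪ L v) := by
        refine card_le_card fun i hi => ?_
        rcases (mem_filter.1 hi).2 with ⟨u, hu, rfl, hvu⟩ | hi
        · exact mem_union_left _ (mem_image_of_mem g (mem_filter.2 ⟨hu, hvu⟩))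
        · exact mem_union_right _ hi
    _ ≤ _ := (card_union_le _ _).trans (Nat.add_le_add_right card_image_le _)

lemma exists_not_blocked [Fintype ι] (g : V → ι) {v : V}
    (hv : #{u ∈ s | G.Adj v u} + #(L v) < Fintype.card ι) : ∃ c, ¬Blocked G s L g v c := by
  by_contra! h
  have := card_blocked_le (G := G) (s := s) (L := L) g v
  rw [filter_true_of_mem fun i _ => h i, card_univ] at this
  omega

lemma exists_isListColoringOn [DecidableEq V] [Fintype ι] [Nonempty ι]
    (hdeg : ∀ v ∈ s, #{u ∈ s | G.Adj v u} + #(L v) < Fintype.card ι) :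
    ∃ g : V → ι, IsListColoringOn G s L g := by
  induction s using Finset.induction_on with
  | empty => exact ⟨fun _ => Classical.arbitrary ι, by simp [IsListColoringOn]⟩
  | insert x s hx ih =>
    have hmono : ∀ v, #{u ∈ s | G.Adj v u} ≤ #{u ∈ insert x s | G.Adj v u} := fun v =>
      card_le_card (filter_subset_filter _ (subset_insert x s))
    obtain ⟨g, hg⟩ := ih fun v hv => (Nat.add_le_add_right (hmono v) _).trans_lt
      (hdeg v (mem_insert_of_mem hv))
    obtain ⟨c, hc⟩ := exists_not_blocked g ((Nat.add_le_add_right (hmono x) _).trans_lt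
      (hdeg x (mem_insert_self x s)))
    exact ⟨_, hg.update hc⟩

lemma card_filter_blocked_le {Δ B : ℕ} (g : V → ι) (i : ι)
    (hdeg : ∀ u ∈ s, #{v ∈ s | G.Adj u v} ≤ Δ) (hL : #{v ∈ s | i ∈ L v} ≤ B) :
    #{v ∈ s | Blocked G s L g v i} ≤ Δ * #{u ∈ s | g u = i} + B := by
  classical
  calc #{v ∈ s | Blocked G s L g v i}
      ≤ #({v ∈ s | ∃ u ∈ {u ∈ s | g u = i}, G.Adj v u} ∪ {v ∈ s | i ∈ L v}) := by
        refine card_le_card fun v hv => ?_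
        obtain ⟨hv, ⟨u, hu, hui, hvu⟩ | hi⟩ := mem_filter.1 hv
        · exact mem_union_left _ (mem_filter.2 ⟨hv, u, mem_filter.2 ⟨hu, hui⟩, hvu⟩)
        · exact mem_union_right _ (mem_filter.2 ⟨hv, hi⟩)
    _ ≤ _ := (card_union_le _ _).trans (Nat.add_le_add
        (card_filter_exists_adj_le _ fun u hu => hdeg u (mem_filter.1 hu).1) hL)

end ListColoring

section Potential

variable [DecidableEq ι] (s : Finset V) (t : ι → ℕ)

def excess (g : V → ι) (i : ι) : ℤ := #{v ∈ s | g v = i} - t i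

def potential [Fintype ι] (g : V → ι) : ℤ := ∑ i, excess s t g i ^ 2

variable {s t}

lemma excess_update [DecidableEq V] {g : V → ι} {x : V} (hx : x ∈ s) (c i : ι) :
    excess s t (Function.update g x c) i =
      excess s t g i - (if g x = i then 1 else 0) + (if c = i then 1 else 0) := by
  simp only [excess, card_filter, Nat.cast_sum, Nat.cast_ite, Nat.cast_one, Nat.cast_zero]
  rw [← add_sum_erase s _ hx, ← add_sum_erase s _ hx,
    sum_congr rfl fun v hv => by rw [Function.update_of_ne (ne_of_mem_erase hv)]]
  simp only [Function.update_self]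
  ring

lemma potential_update [Fintype ι] [DecidableEq V] {g : V → ι} {x : V} (hx : x ∈ s) {c : ι}
    (hc : g x ≠ c) :
    potential s t (Function.update g x c) =
      potential s t g - 2 * excess s t g (g x) + 2 * excess s t g c + 2 := by
  simp only [potential, excess_update hx, add_sq, sub_sq, sum_add_distrib, sum_sub_distrib,
    mul_ite, mul_one, mul_zero, sum_ite_eq, mem_univ, ↓reduceIte, ite_pow, one_pow, ne_eq,
    OfNat.ofNat_ne_zero, not_false_eq_true, zero_pow, hc, sub_zero]
  ring

lemma sum_excess [Fintype ι] (g : V → ι) (hsum : ∑ i, t i = #s) : ∑ i, excess s t g i = 0 := by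
  simp only [excess, sum_sub_distrib, ← Nat.cast_sum, hsum,
    ← card_eq_sum_card_fiberwise (f := g) (t := univ) (fun _ _ => mem_coe.2 (mem_univ _)), sub_self]

end Potential

section Optimal

variable [Fintype ι] [DecidableEq ι] [DecidableEq V] (G : SimpleGraph V) (s : Finset V)
  (L : V → Finset ι) (t : ι → ℕ)

def IsOptimal (g : V → ι) : Prop :=
  IsListColoringOn G s L g ∧
    ∀ g', IsListColoringOn G s L g' → potential s t g ≤ potential s t g'

variable {G s L t} {g : V → ι}

lemma IsOptimal.blocked (hg : IsOptimal G s L t g) {x : V} (hx : x ∈ s) {c : ι} (hc : g x ≠ c)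
    (he : excess s t g c + 2 ≤ excess s t g (g x)) : Blocked G s L g x c := by
  by_contra hb
  have := hg.2 _ (by simpa [insert_eq_of_mem hx] using hg.1.update hb)
  rw [potential_update hx hc] at this
  linarith

lemma IsOptimal.update (hg : IsOptimal G s L t g) {x : V} (hx : x ∈ s) {c : ι}
    (hb : ¬Blocked G s L g x c) (he : excess s t g (g x) = excess s t g c + 1) :
    IsOptimal G s L t (Function.update g x c) := by
  have hc : g x ≠ c := fun h => by rw [h] at he; omega
  refine ⟨by simpa [insert_eq_of_mem hx] using hg.1.update hb, fun g' hg' => ?_⟩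
  rw [potential_update hx hc]
  linarith [hg.2 g' hg']

/-- Moving `x` to the class `c` keeps `g` optimal, so `w` must also be blocked from the class
of `x` after the move, hence already before it. -/
lemma IsOptimal.blocked_of_excess_eq (hg : IsOptimal G s L t g) {x : V} (hx : x ∈ s) {c : ι}
    (hb : ¬Blocked G s L g x c) (he : excess s t g (g x) = excess s t g c + 1) {w : V}
    (hw : w ∈ s) (hwx : g w ≠ g x) (hwc : g w ≠ c) (hwe : excess s t g c + 2 ≤ excess s t g (g w)) :
    Blocked G s L g w (g x) := by
  have hxw : w ≠ x := fun h => hwx (h ▸ rfl)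
  have hc : c ≠ g x := fun h => by rw [h] at he; omega
  have hgw : Function.update g x c w = g w := Function.update_of_ne hxw _ _
  have := (hg.update hx hb he).blocked (c := g x) hw (by rwa [hgw]) (by
    simp only [hgw, excess_update hx, if_neg hwx.symm, if_neg hwc.symm, if_neg hc, if_pos]
    omega)
  rcases this with ⟨u, hus, hux, hwu⟩ | hL
  · have hu : u ≠ x := by rintro rfl; exact hc (by simpa using hux)
    exact .inl ⟨u, hus, by rwa [Function.update_of_ne hu] at hux, hwu⟩
  · exact .inr hL

/-- If `v` is not blocked from `C`, optimality puts the class of `v` exactly one above `C`, and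
then `IsOptimal.blocked_of_excess_eq` applies. -/
lemma IsOptimal.blocked_of_not_blocked (hg : IsOptimal G s L t g) {w : V} (hw : w ∈ s) {C : ι}
    (hC : excess s t g C < 0) (hwC : excess s t g C + 2 ≤ excess s t g (g w)) {v : V}
    (hv : v ∈ s) (hvw : excess s t g (g v) ≤ 0 → ¬Blocked G s L g w (g v)) :
    Blocked G s L g v C := by
  rcases lt_trichotomy (excess s t g (g v)) (excess s t g C + 1) with h | h | h
  · exact (hvw (by omega) (hg.blocked hw (by intro h'; rw [h'] at hwC; omega) (by omega))).elim
  · by_contra hb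
    refine hvw (by omega) (hg.blocked_of_excess_eq hv hb h hw ?_ ?_ hwC)
    · intro h'; rw [h'] at hwC; omega
    · intro h'; rw [h'] at hwC; omega
  · exact hg.blocked hv (by intro h'; rw [h'] at h; omega) (by omega)

variable [DecidableRel G.Adj]

lemma IsOptimal.card_le {Δ q B : ℕ} (hg : IsOptimal G s L t g) {w : V}
    (hw : w ∈ s) {C : ι} (hC : excess s t g C < 0)
    (hwC : excess s t g C + 2 ≤ excess s t g (g w))
    (hdeg : ∀ v ∈ s, #{u ∈ s | G.Adj v u} + #(L v) ≤ Δ) (hL : #{v ∈ s | C ∈ L v} ≤ B)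
    (ht : ∀ i, t i ≤ q + 1) :
    #s ≤ Δ * (q + 1) + (Δ * #{v ∈ s | g v = C} + B) := by
  set T : Finset ι := {j | Blocked G s L g w j ∧ excess s t g j ≤ 0}
  have hT : #T ≤ Δ :=
    ((card_le_card fun j hj => mem_filter.2 ⟨mem_univ _, (mem_filter.1 hj).2.1⟩).trans
      (card_blocked_le g w)).trans (hdeg w hw)
  have hT_part : #{v ∈ s | g v ∈ T} ≤ Δ * (q + 1) := by
    rw [← sum_card_fiberwise_eq_card_filter]
    refine (sum_le_card_nsmul _ _ (q + 1) fun j hj => ?_).trans ?_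
    · have hj := (mem_filter.1 hj).2.2
      have := ht j
      simp only [excess] at hj
      omega
    · rw [smul_eq_mul]; exact Nat.mul_le_mul_right _ hT
  rw [← card_filter_add_card_filter_not (s := s) (fun v => g v ∈ T)]
  refine Nat.add_le_add hT_part ((card_le_card fun v hv => ?_).trans
    (card_filter_blocked_le g C (fun u hu => (Nat.le_add_right _ _).trans (hdeg u hu)) hL))
  obtain ⟨hv, hvT⟩ := mem_filter.1 hv
  exact mem_filter.2 ⟨hv, hg.blocked_of_not_blocked hw hC hwC hv fun h₁ h₂ =>
    hvT (mem_filter.2 ⟨mem_univ _, h₂, h₁⟩)⟩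

lemma IsOptimal.excess_eq_zero {Δ q B : ℕ} (hg : IsOptimal G s L t g)
    (hk : 6 * Δ ≤ Fintype.card ι)
    (hdeg : ∀ v ∈ s, #{u ∈ s | G.Adj v u} + #(L v) ≤ Δ)
    (hL : ∀ i, #{v ∈ s | i ∈ L v} ≤ B) (hB : B ≤ Δ * (q + 1))
    (ht : ∀ i, q ≤ t i ∧ t i ≤ q + 1) (hsum : ∑ i, t i = #s)
    (hsmall : 0 < q ∨ B = 0 ∨ 2 * Δ < #s) (i : ι) :
    excess s t g i = 0 := by
  by_contra hi
  obtain ⟨P, -, hP⟩ := exists_pos_of_sum_zero_of_exists_nonzero _ (sum_excess g hsum)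
    ⟨i, mem_univ _, hi⟩
  obtain ⟨C, -, hC⟩ := exists_pos_of_sum_zero_of_exists_nonzero (-excess s t g)
    (by simp only [Pi.neg_apply, sum_neg_distrib, sum_excess g hsum, neg_zero])
    ⟨i, mem_univ _, by simpa using hi⟩
  simp only [Pi.neg_apply, Left.neg_pos_iff] at hC
  obtain ⟨w, hw⟩ : {v ∈ s | g v = P}.Nonempty := by
    rw [← card_pos]; simp only [excess] at hP; omega
  obtain ⟨hws, rfl⟩ := mem_filter.1 hw
  have hwC : excess s t g C + 2 ≤ excess s t g (g w) := by omega
  have hcount := hg.card_le hws hC hwC hdeg (hL C) fun j => (ht j).2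
  have hC_card : #{v ∈ s | g v = C} ≤ q := by
    have := (ht C).2; simp only [excess] at hC; omega
  have hw_C : 1 ≤ Δ * #{v ∈ s | g v = C} + B :=
    (card_pos.2 ⟨w, mem_filter.2 ⟨hws, hg.blocked hws (by rintro rfl; omega) hwC⟩⟩).trans_le
      (card_filter_blocked_le g C (fun u hu => (Nat.le_add_right _ _).trans (hdeg u hu)) (hL C))
  have hn : 6 * Δ * q ≤ #s := by
    rw [← hsum]
    calc 6 * Δ * q ≤ Fintype.card ι * q := Nat.mul_le_mul_right _ hk
      _ = ∑ _j : ι, q := by rw [sum_const, card_univ, smul_eq_mul]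
      _ ≤ _ := sum_le_sum fun j _ => (ht j).1
  rcases Nat.eq_zero_or_pos q with rfl | hq
  · obtain hC0 : #{v ∈ s | g v = C} = 0 := by omega
    rw [hC0] at hcount hw_C
    omega
  · have := Nat.mul_le_mul_left Δ hC_card
    nlinarith

theorem exists_isListColoringOn_card_eq [Fintype V] [Nonempty ι]
    {Δ q B : ℕ} (hk : 6 * Δ ≤ Fintype.card ι)
    (hdeg : ∀ v ∈ s, #{u ∈ s | G.Adj v u} + #(L v) ≤ Δ)
    (hL : ∀ i, #{v ∈ s | i ∈ L v} ≤ B) (hB : B ≤ Δ * (q + 1))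
    (ht : ∀ i, q ≤ t i ∧ t i ≤ q + 1) (hsum : ∑ i, t i = #s)
    (hsmall : 0 < q ∨ B = 0 ∨ 2 * Δ < #s) :
    ∃ g : V → ι, IsListColoringOn G s L g ∧ ∀ i, #{v ∈ s | g v = i} = t i := by
  classical
  have hι := Fintype.card_pos (α := ι)
  obtain ⟨g₀, hg₀⟩ := exists_isListColoringOn fun v hv => (hdeg v hv).trans_lt (by omega)
  obtain ⟨g, hg, hmin⟩ := exists_min_image {g | IsListColoringOn G s L g} (potential s t)
    ⟨g₀, mem_filter.2 ⟨mem_univ _, hg₀⟩⟩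
  have hopt : IsOptimal G s L t g :=
    ⟨(mem_filter.1 hg).2, fun g' hg' => hmin g' (mem_filter.2 ⟨mem_univ _, hg'⟩)⟩
  refine ⟨g, hopt.1, fun i => ?_⟩
  have := hopt.excess_eq_zero hk hdeg hL hB ht hsum hsmall i
  simp only [excess] at this
  omega

end Optimal

def evenSplit (N k : ℕ) (i : Fin k) : ℕ := N / k + if (i : ℕ) < N % k then 1 else 0

lemma evenSplit_le_evenSplit_add_one (N k : ℕ) (i j : Fin k) :
    evenSplit N k i ≤ evenSplit N k j + 1 := by
  unfold evenSplit; split_ifs <;> omega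

lemma sum_evenSplit (N : ℕ) {k : ℕ} (hk : 0 < k) : ∑ i, evenSplit N k i = N := by
  simp only [evenSplit, sum_add_distrib, sum_const, card_univ, Fintype.card_fin, smul_eq_mul,
    sum_boole, Fin.card_filter_val_lt, Nat.cast_id, min_eq_right (Nat.mod_lt N hk).le]
  exact Nat.div_add_mod N k

lemma evenSplit_add_sub (N₁ N₂ : ℕ) {k : ℕ} (hk : 0 < k) (i : Fin k) :
    evenSplit N₁ k i ≤ evenSplit (N₁ + N₂) k i ∧
      N₂ / k ≤ evenSplit (N₁ + N₂) k i - evenSplit N₁ k i ∧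
      evenSplit (N₁ + N₂) k i - evenSplit N₁ k i ≤ N₂ / k + 1 := by
  have hmod := Nat.add_mod_add_ite N₁ N₂ k
  have h₂ := Nat.mod_lt N₂ hk
  unfold evenSplit
  rw [Nat.add_div hk]
  generalize N₁ / k = p₁, N₂ / k = p₂, N₁ % k = r₁, N₂ % k = r₂, (N₁ + N₂) % k = r at *
  split_ifs at * <;> omega

section Equitable

variable {ι : Type*} [DecidableEq ι]

def IsEquitableOn (f : V → ι) (s : Finset V) : Prop :=
  ∀ i j, #{v ∈ s | f v = i} ≤ #{v ∈ s | f v = j} + 1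

lemma isEquitableOn_of_injective {f : V → ι} (hf : Function.Injective f) (s : Finset V) :
    IsEquitableOn f s := fun _ _ =>
  (card_le_one.2 fun _ ha _ hb => hf ((mem_filter.1 ha).2.trans (mem_filter.1 hb).2.symm)).trans
    (Nat.le_add_left _ _)

lemma isEquitableOn_of_card_eq {k N : ℕ} {f : V → Fin k} {s : Finset V}
    (hf : ∀ i, #{v ∈ s | f v = i} = evenSplit N k i) : IsEquitableOn f s := fun i j => by
  rw [hf, hf]; exact evenSplit_le_evenSplit_add_one N k i j

end Equitable

section TwoRounds

variable [Fintype V] (G : SimpleGraph V) [DecidableRel G.Adj]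

lemma card_filter_adj_le_maxDegree (v : V) (A : Finset V) : #{u ∈ A | G.Adj v u} ≤ G.maxDegree :=
  (card_le_card fun u hu => (G.mem_neighborFinset v u).2 (mem_filter.1 hu).2).trans
    ((G.card_neighborFinset_eq_degree v).le.trans (G.degree_le_maxDegree v))

variable [DecidableEq V]

lemma card_filter_adj_add_card_filter_adj_compl (v : V) (S : Finset V) :
    #{u ∈ S | G.Adj v u} + #{u ∈ Sᶜ | G.Adj v u} = G.degree v := by
  rw [← G.card_neighborFinset_eq_degree,
    ← card_filter_add_card_filter_not (s := G.neighborFinset v) (· ∈ S)]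
  congr 2 <;> ext u <;> simp [and_comm]

variable {G} {k : ℕ}

lemma exists_isListColoringOn_evenSplit (hk₀ : 0 < k) (hk : 6 * G.maxDegree ≤ k)
    (S : Finset V) :
    ∃ g : V → Fin k, IsListColoringOn G S (fun _ => ∅) g ∧
      ∀ i, #{v ∈ S | g v = i} = evenSplit #S k i := by
  have : Nonempty (Fin k) := ⟨⟨0, hk₀⟩⟩
  exact exists_isListColoringOn_card_eq (Δ := G.maxDegree) (q := #S / k) (B := 0)
    (by simpa using hk) (fun v _ => by simpa using card_filter_adj_le_maxDegree G v S)
    (fun _ => by simp) (Nat.zero_le _) (fun i => by unfold evenSplit; split_ifs <;> omega)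
    (sum_evenSplit _ hk₀) (by simp)

lemma exists_isListColoringOn_compl_evenSplit (hk₀ : 0 < k) (hk : 6 * G.maxDegree ≤ k)
    (hn : 4 * G.maxDegree < Fintype.card V) {S : Finset V} (hS : 2 * #S ≤ Fintype.card V)
    {g₁ : V → Fin k} (hg₁ : ∀ i, #{v ∈ S | g₁ v = i} = evenSplit #S k i) :
    ∃ g₂ : V → Fin k, IsListColoringOn G Sᶜ (fun v => {u ∈ S | G.Adj v u}.image g₁) g₂ ∧
      ∀ i, #{v ∈ Sᶜ | g₂ v = i} = evenSplit (Fintype.card V) k i - evenSplit #S k i := by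
  have : Nonempty (Fin k) := ⟨⟨0, hk₀⟩⟩
  have hcard := card_add_card_compl S
  have hsplit := evenSplit_add_sub #S #Sᶜ hk₀
  rw [hcard] at hsplit
  refine exists_isListColoringOn_card_eq (Δ := G.maxDegree) (q := #Sᶜ / k)
    (B := G.maxDegree * (#S / k + 1)) (by simpa using hk) (fun v _ => ?_) (fun i => ?_)
    (Nat.mul_le_mul_left _ (Nat.add_le_add_right (Nat.div_le_div_right (by omega)) 1))
    (fun i => ⟨(hsplit i).2.1, (hsplit i).2.2⟩) ?_ (by omega)
  · have := card_filter_adj_add_card_filter_adj_compl G v S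
    have := G.degree_le_maxDegree v
    have := card_image_le (s := {u ∈ S | G.Adj v u}) (f := g₁)
    omega
  · calc #{v ∈ Sᶜ | i ∈ {u ∈ S | G.Adj v u}.image g₁}
        ≤ #{v ∈ Sᶜ | ∃ u ∈ {u ∈ S | g₁ u = i}, G.Adj v u} := by
          refine card_le_card fun v hv => ?_
          obtain ⟨hvS, hi⟩ := mem_filter.1 hv
          obtain ⟨u, hu, hui⟩ := mem_image.1 hi
          exact mem_filter.2 ⟨hvS, u, mem_filter.2 ⟨(mem_filter.1 hu).1, hui⟩,
            (mem_filter.1 hu).2⟩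
      _ ≤ G.maxDegree * #{u ∈ S | g₁ u = i} :=
          card_filter_exists_adj_le _ fun u _ => card_filter_adj_le_maxDegree G u _
      _ ≤ G.maxDegree * (#S / k + 1) := by
          rw [hg₁]; unfold evenSplit; gcongr; split_ifs <;> omega
  · rw [sum_tsub_distrib _ fun i _ => (hsplit i).1, sum_evenSplit _ hk₀, sum_evenSplit _ hk₀]
    omega

lemma IsListColoringOn.piecewise_adj_ne [DecidableEq ι] {S : Finset V} {g₁ g₂ : V → ι}
    (hg₁ : IsListColoringOn G S (fun _ => ∅) g₁)
    (hg₂ : IsListColoringOn G Sᶜ (fun v => {u ∈ S | G.Adj v u}.image g₁) g₂) {u v : V}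
    (huv : G.Adj u v) : S.piecewise g₁ g₂ u ≠ S.piecewise g₁ g₂ v := by
  by_cases hu : u ∈ S <;> by_cases hv : v ∈ S <;>
    simp only [piecewise_eq_of_mem, piecewise_eq_of_notMem, hu, hv, not_false_eq_true]
  · exact hg₁.1 u hu v hv huv
  · exact fun h => hg₂.2 v (mem_compl.2 hv) (mem_image.2 ⟨u, mem_filter.2 ⟨hu, huv.symm⟩, h⟩)
  · exact fun h => hg₂.2 u (mem_compl.2 hu) (mem_image.2 ⟨v, mem_filter.2 ⟨hv, huv⟩, h.symm⟩)
  · exact hg₂.1 u (mem_compl.2 hu) v (mem_compl.2 hv) huv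

theorem exists_isEquitableOn_and_compl (hk₀ : 0 < k) (hk : 6 * G.maxDegree ≤ k)
    (hn : 4 * G.maxDegree < Fintype.card V) (S : Finset V) (hS : 2 * #S ≤ Fintype.card V) :
    ∃ f : V → Fin k, (∀ u v, G.Adj u v → f u ≠ f v) ∧
      IsEquitableOn f univ ∧ IsEquitableOn f S ∧ IsEquitableOn f Sᶜ := by
  obtain ⟨g₁, hg₁, hcard₁⟩ := exists_isListColoringOn_evenSplit hk₀ hk S
  obtain ⟨g₂, hg₂, hcard₂⟩ := exists_isListColoringOn_compl_evenSplit hk₀ hk hn hS hcard₁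
  have hsplit := evenSplit_add_sub #S #Sᶜ hk₀
  rw [card_add_card_compl] at hsplit
  have hf₁ : ∀ i, {v ∈ S | S.piecewise g₁ g₂ v = i} = {v ∈ S | g₁ v = i} := fun i =>
    filter_congr fun v hv => by rw [piecewise_eq_of_mem _ _ _ hv]
  have hf₂ : ∀ i, {v ∈ Sᶜ | S.piecewise g₁ g₂ v = i} = {v ∈ Sᶜ | g₂ v = i} := fun i =>
    filter_congr fun v hv => by rw [piecewise_eq_of_notMem _ _ _ (mem_compl.1 hv)]
  have hf : ∀ i, #{v | S.piecewise g₁ g₂ v = i} = evenSplit (Fintype.card V) k i := fun i => by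
    rw [← union_compl S, filter_union, card_union_of_disjoint
      (disjoint_filter_filter disjoint_compl_right), hf₁, hf₂, hcard₁, hcard₂]
    have := (hsplit i).1
    omega
  refine ⟨S.piecewise g₁ g₂, fun u v => hg₁.piecewise_adj_ne hg₂, isEquitableOn_of_card_eq hf,
    isEquitableOn_of_card_eq fun i => by rw [hf₁, hcard₁], fun i j => ?_⟩
  rw [hf₂, hf₂, hcard₂, hcard₂]
  have := hsplit i
  have := hsplit j
  omega

theorem exists_isEquitableOn (hk₀ : 0 < k) (hk : 6 * G.maxDegree ≤ k) (Y : Finset V) :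
    ∃ f : V → Fin k, (∀ u v, G.Adj u v → f u ≠ f v) ∧ IsEquitableOn f univ ∧ IsEquitableOn f Y := by
  rcases le_or_gt (Fintype.card V) k with hV | hV
  · have hinj := (Fin.castLE_injective hV).comp (Fintype.equivFin V).injective
    exact ⟨_, fun u v huv => hinj.ne huv.ne, isEquitableOn_of_injective hinj _,
      isEquitableOn_of_injective hinj _⟩
  rcases le_or_gt (2 * #Y) (Fintype.card V) with hY | hY
  · obtain ⟨f, hadj, huniv, hY, -⟩ := exists_isEquitableOn_and_compl hk₀ hk (by omega) Y hY
    exact ⟨f, hadj, huniv, hY⟩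
  · obtain ⟨f, hadj, huniv, -, hY⟩ := exists_isEquitableOn_and_compl hk₀ hk (by omega) Yᶜ
      (by rw [card_compl]; omega)
    exact ⟨f, hadj, huniv, by rwa [compl_compl] at hY⟩

end TwoRounds

end EquitableColoring

theorem stmt_10 {V : Type*} [Fintype V] [DecidableEq V] (F : SimpleGraph V)
    [DecidableRel F.Adj] (hΔ : 1 ≤ F.maxDegree) (Y : Finset V) :
    ∃ f : V → Fin (8 * F.maxDegree),
      -- each part is an independent set
      (∀ i, ∀ u v : V, f u = i → f v = i → ¬ F.Adj u v) ∧
      -- the parts differ in size by at most one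
      (∀ i j, ((univ : Finset V).filter (fun v => f v = i)).card ≤
        ((univ : Finset V).filter (fun v => f v = j)).card + 1) ∧
      -- the intersections of the parts with Y differ in size by at most one
      (∀ i j, (((univ : Finset V).filter (fun v => f v = i)) ∩ Y).card ≤
        (((univ : Finset V).filter (fun v => f v = j)) ∩ Y).card + 1) := by
  obtain ⟨f, hadj, huniv, hY⟩ :=
    EquitableColoring.exists_isEquitableOn (G := F) (k := 8 * F.maxDegree) (by omega) (by omega) Y
  refine ⟨f, fun i u v hu hv huv => hadj u v huv (hu.trans hv.symm), huniv, fun i j => ?_⟩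
  simpa only [filter_inter, univ_inter] using hY i j
end
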